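/- arXiv:2011.09132 — 3 statements merged into one kernel-verified Lean document; each statement's English description precedes it below -/
import Mathlib

section
/- Let X and Y be Fréchet spaces and let f : X → Y be a continuous linear map. If the range of f has finite codimension in Y, i.e. the quotient vector space Y ⧸ (range of f) is finite-dimensional over ℝ, then the range of f is a closed subspace of Y. -/
open Filter Topology Set
open scoped Uniformity Pointwise

section OMT

variable {Z Y : Type*}
    [AddCommGroup Z] [Module ℝ Z] [UniformSpace Z] [IsUniformAddGroup Z]
    [ContinuousSMul ℝ Z] [LocallyConvexSpace ℝ Z]
    [(𝓤 Z).IsCountablyGenerated] [CompleteSpace Z]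
    [AddCommGroup Y] [Module ℝ Y] [UniformSpace Y] [IsUniformAddGroup Y]
    [ContinuousSMul ℝ Y]
    [(𝓤 Y).IsCountablyGenerated] [T2Space Y] [CompleteSpace Y]

/-- Step A of the open mapping theorem for Fréchet spaces: the closure of the image of
any neighborhood of zero is a neighborhood of zero. -/
lemma omt_stepA (g : Z →L[ℝ] Y) (hg : Function.Surjective g)
    {U : Set Z} (hU : U ∈ 𝓝 (0 : Z)) : closure (g '' U) ∈ 𝓝 (0 : Y) := by
  -- find a convex symmetric neighborhood V ⊆ U
  obtain ⟨C, ⟨hC0, hCc⟩, hCU⟩ := (@LocallyConvexSpace.convex_basis ℝ Z _ _ _ _ _ _ (0 : Z)).mem_iff.1 hU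
  set V : Set Z := C ∩ -C with hVdef
  have hV0 : V ∈ 𝓝 (0 : Z) := inter_mem hC0 (neg_mem_nhds_zero Z hC0)
  have hVc : Convex ℝ V := hCc.inter hCc.neg
  have hVU : V ⊆ U := fun a ha => hCU ha.1
  have hVsym : -V = V := by
    ext a
    simp only [hVdef, Set.mem_neg, Set.mem_inter_iff, neg_neg]
    tauto
  set D := closure (g '' V) with hDdef
  have hDc : Convex ℝ D := (hVc.linear_image (g : Z →ₗ[ℝ] Y)).closure
  have hDclosed : IsClosed D := isClosed_closure
  have himg_neg : -(g '' V) = g '' V := by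
    have : -(g '' V) = g '' (-V) := by
      ext y
      constructor
      · rintro hy
        obtain ⟨v, hv, hgv⟩ := hy
        exact ⟨-v, by simpa using hv, by simp [hgv]⟩
      · rintro ⟨v, hv, rfl⟩
        exact ⟨-v, by simpa using hv, by simp⟩
    rw [this, hVsym]
  have hDsym : -D = D := by
    rw [hDdef, neg_closure, himg_neg]
  -- covering of Y by dilates of D
  have hcover : ⋃ n : ℕ, ((n : ℝ) + 1) • D = univ := by
    refine eq_univ_of_forall fun y => ?_
    obtain ⟨z, rfl⟩ := hg y
    have h1 : Tendsto (fun n : ℕ => (1 / ((n : ℝ) + 1)) • z) atTop (𝓝 ((0 : ℝ) • z)) :=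
      tendsto_one_div_add_atTop_nhds_zero_nat.smul_const z
    rw [zero_smul] at h1
    obtain ⟨n, hn⟩ := (h1.eventually_mem hV0).exists
    have hne : ((n : ℝ) + 1) ≠ 0 := by positivity
    have h2 : ((n : ℝ) + 1) • g ((1 / ((n : ℝ) + 1)) • z) = g z := by
      rw [← map_smul, smul_smul, mul_one_div_cancel hne, one_smul]
    have h3 := Set.smul_mem_smul_set (a := ((n : ℝ) + 1))
      (subset_closure (mem_image_of_mem _ hn) : g ((1 / ((n : ℝ) + 1)) • z) ∈ D)
    rw [h2] at h3
    exact mem_iUnion.2 ⟨n, h3⟩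
  have hcl : ∀ n : ℕ, IsClosed (((n : ℝ) + 1) • D) := fun n =>
    hDclosed.smul_of_ne_zero (by positivity)
  obtain ⟨n, hne⟩ := nonempty_interior_of_iUnion_of_closed hcl hcover
  have hn0 : ((n : ℝ) + 1) ≠ 0 := by positivity
  rw [interior_smul₀ hn0] at hne
  obtain ⟨x, hx⟩ := hne
  obtain ⟨d, hd, rfl⟩ := hx
  -- 0 is in the interior of D
  have hdneg : -d ∈ interior D := by
    have hopen : IsOpen ((Homeomorph.neg Y) '' interior D) :=
      (Homeomorph.neg Y).isOpenMap _ isOpen_interior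
    have hsub : (Homeomorph.neg Y) '' interior D ⊆ D := by
      rintro _ ⟨w, hw, rfl⟩
      have h5 : -w ∈ -D := Set.neg_mem_neg.2 (interior_subset hw)
      rw [hDsym] at h5
      simpa using h5
    have h6 := interior_maximal hsub hopen ⟨d, hd, rfl⟩
    simpa using h6
  have h0 : (0 : Y) ∈ interior D := by
    have := hDc.interior hd hdneg (by norm_num : (0:ℝ) ≤ 1/2) (by norm_num : (0:ℝ) ≤ 1/2)
      (by norm_num)
    simpa [smul_neg] using this
  have hD0 : D ∈ 𝓝 (0 : Y) := mem_interior_iff_mem_nhds.1 h0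
  exact mem_of_superset hD0 (closure_mono (image_mono hVU))

/-- Step B: the image of any neighborhood of zero is a neighborhood of zero. -/
lemma omt_stepB (g : Z →L[ℝ] Y) (hg : Function.Surjective g)
    {U : Set Z} (hU : U ∈ 𝓝 (0 : Z)) : g '' U ∈ 𝓝 (0 : Y) := by
  -- first shrink U to U' with U' + U' ⊆ U
  obtain ⟨U', hU'0, hU'sum⟩ := exists_nhds_zero_half hU
  have hclU' : closure U' ⊆ U := by
    intro w hw
    have hnb : (fun v => w + v) '' (-U') ∈ 𝓝 w := by
      have := (isOpenMap_add_left w).image_mem_nhds (neg_mem_nhds_zero Z hU'0)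
      simpa using this
    obtain ⟨u, hu, huU'⟩ := mem_closure_iff_nhds.1 hw _ hnb
    obtain ⟨v, hv, rfl⟩ := hu
    have hvU : -v ∈ U' := by simpa using hv
    have : (w + v) + -v ∈ U := hU'sum _ huU' _ hvU
    simpa using this
  -- antitone basis of neighborhoods of 0 in Z
  obtain ⟨W, hWb⟩ := (𝓝 (0 : Z)).exists_antitone_basis
  -- construct the sequence of neighborhoods V
  have hstep : ∀ s : Set Z, s ∈ 𝓝 (0 : Z) → ∀ n : ℕ,
      ∃ t, t ∈ 𝓝 (0 : Z) ∧ (∀ a ∈ t, ∀ b ∈ t, a + b ∈ s) ∧ t ⊆ W n := by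
    intro s hs n
    obtain ⟨t, ht, hts⟩ := exists_nhds_zero_half hs
    exact ⟨t ∩ W n, inter_mem ht (hWb.toHasBasis.mem_of_mem trivial),
      fun a ha b hb => hts a ha.1 b hb.1, fun a ha => ha.2⟩
  choose T hT1 hT2 hT3 using hstep
  let VV : ℕ → {s : Set Z // s ∈ 𝓝 (0 : Z)} := fun n =>
    Nat.rec ⟨U', hU'0⟩ (fun n v => ⟨T v.1 v.2 n, hT1 v.1 v.2 n⟩) n
  set V : ℕ → Set Z := fun n => (VV n).1 with hVdef
  have hV0 : ∀ n, V n ∈ 𝓝 (0 : Z) := fun n => (VV n).2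
  have hVsum : ∀ n, ∀ a ∈ V (n + 1), ∀ b ∈ V (n + 1), a + b ∈ V n := fun n =>
    hT2 (VV n).1 (VV n).2 n
  have hVW : ∀ n, V (n + 1) ⊆ W n := fun n => hT3 (VV n).1 (VV n).2 n
  have hVmem0 : ∀ n, (0 : Z) ∈ V n := fun n => mem_of_mem_nhds (hV0 n)
  have hVsub : ∀ n, V (n + 1) ⊆ V n := fun n a ha => by
    have := hVsum n a ha 0 (hVmem0 (n + 1))
    simpa using this
  have hVanti : ∀ {k m : ℕ}, k ≤ m → V m ⊆ V k := by
    intro k m hkm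
    induction hkm with
    | refl => exact subset_rfl
    | step h ih => exact fun a ha => (ih (hVsub _ ha))
  have hVbasis : ∀ N ∈ 𝓝 (0 : Z), ∃ k, V k ⊆ N := by
    intro N hN
    obtain ⟨n, -, hn⟩ := hWb.toHasBasis.mem_iff.1 hN
    exact ⟨n + 1, (hVW n).trans hn⟩
  -- key recursive step
  have hkey : ∀ n : ℕ, ∀ w ∈ closure (g '' V (n + 1)),
      ∃ z ∈ V (n + 1), w - g z ∈ closure (g '' V (n + 2)) := by
    intro n w hw
    have hN : closure (g '' V (n + 2)) ∈ 𝓝 (0 : Y) := omt_stepA g hg (hV0 (n + 2))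
    have hnb : (fun v => w + -v) '' closure (g '' V (n + 2)) ∈ 𝓝 w := by
      have := ((isOpenMap_add_left w).comp (isOpenMap_neg Y)).image_mem_nhds hN
      simpa [Function.comp] using this
    obtain ⟨u, hu, hu'⟩ := mem_closure_iff_nhds.1 hw _ hnb
    obtain ⟨v, hv, rfl⟩ := hu
    obtain ⟨z, hz, hgz⟩ := hu'
    refine ⟨z, hz, ?_⟩
    rw [hgz]
    simpa using hv
  choose! ZZ hZZmem hZZres using hkey
  -- now take y in the closure of the image of V 1
  have hmain : closure (g '' V 1) ⊆ g '' U := by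
    intro y hy
    -- recursive construction of the sequence
    let Tn : ℕ → Type _ := fun n => {w : Y // w ∈ closure (g '' V (n + 1))}
    let r : ∀ n, Tn n := fun n =>
      Nat.rec (⟨y, hy⟩ : Tn 0)
        (fun n w => ⟨w.1 - g (ZZ n w.1), hZZres n w.1 w.2⟩) n
    let z : ℕ → Z := fun n => ZZ n (r n).1
    have hz : ∀ n, z n ∈ V (n + 1) := fun n => hZZmem n (r n).1 (r n).2
    have hr : ∀ n, (r (n + 1)).1 = (r n).1 - g (z n) := fun n => rfl
    set s : ℕ → Z := fun k => ∑ i ∈ Finset.range k, z i with hsdef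
    -- partial sums of blocks stay in V k
    have hsum : ∀ l k : ℕ, (∑ i ∈ Finset.range l, z (k + i)) ∈ V k := by
      intro l
      induction l with
      | zero => intro k; simpa using hVmem0 k
      | succ l ih =>
        intro k
        have h1 : (∑ i ∈ Finset.range l, z (k + 1 + i)) ∈ V (k + 1) := ih (k + 1)
        have h2 : z k ∈ V (k + 1) := hz k
        have h3 : (∑ i ∈ Finset.range (l + 1), z (k + i)) =
            z k + ∑ i ∈ Finset.range l, z (k + 1 + i) := by
          rw [Finset.sum_range_succ']
          simp only [Nat.add_zero]
          rw [add_comm]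
          congr 1
          refine Finset.sum_congr rfl fun i _ => ?_
          congr 1
          omega
        rw [h3]
        exact hVsum k _ h2 _ h1
    have hdiff : ∀ k l : ℕ, s (k + l) - s k ∈ V k := by
      intro k l
      rw [hsdef]
      simp only [Finset.sum_range_add, add_sub_cancel_left]
      exact hsum l k
    -- the partial sums form a Cauchy sequence
    have hcs : CauchySeq s := by
      refine ⟨map_neBot, ?_⟩
      rw [uniformity_eq_comap_nhds_zero, prod_map_map_eq, ← Filter.map_le_iff_le_comap,
        Filter.map_map]
      intro N hN
      have hN' : N ∩ -N ∈ 𝓝 (0 : Z) := inter_mem hN (neg_mem_nhds_zero Z hN)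
      obtain ⟨k, hk⟩ := hVbasis _ hN'
      rw [Filter.mem_map]
      have hev : ∀ p : ℕ × ℕ, k ≤ p.1 → k ≤ p.2 → s p.2 - s p.1 ∈ N := by
        rintro ⟨a, b⟩ ha hb
        rcases le_total a b with hab | hab
        · obtain ⟨l, rfl⟩ := Nat.exists_eq_add_of_le hab
          exact (hk (hVanti ha (hdiff a l))).1
        · obtain ⟨l, rfl⟩ := Nat.exists_eq_add_of_le hab
          have := (hk (hVanti hb (hdiff b l))).2
          simpa using this
      filter_upwards [Filter.prod_mem_prod (Filter.eventually_ge_atTop k)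
        (Filter.eventually_ge_atTop k)] with p hp
      exact hev p hp.1 hp.2
    obtain ⟨x, hx⟩ := cauchySeq_tendsto_of_complete hcs
    -- residual identity
    have hry : ∀ k, (r k).1 = y - g (s k) := by
      intro k
      induction k with
      | zero =>
        show y = y - g (s 0)
        simp [hsdef]
      | succ k ih =>
        rw [hr k, ih, hsdef]
        simp only [Finset.sum_range_succ, map_add]
        abel
    -- the residuals tend to zero
    have hres : Tendsto (fun k => y - g (s k)) atTop (𝓝 (0 : Y)) := by
      rw [(closed_nhds_basis (0 : Y)).tendsto_right_iff]
      rintro N ⟨hN, hNc⟩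
      have hNpre : g ⁻¹' N ∈ 𝓝 (0 : Z) :=
        g.continuous.continuousAt.preimage_mem_nhds (by simpa using hN)
      obtain ⟨m, hm⟩ := hVbasis _ hNpre
      filter_upwards [Filter.eventually_ge_atTop m] with k hkm
      have h1 : (r k).1 ∈ closure (g '' V (k + 1)) := (r k).2
      have h2 : g '' V (k + 1) ⊆ N := by
        intro u hu
        obtain ⟨v, hv, rfl⟩ := hu
        exact hm (hVanti (le_trans hkm (Nat.le_succ k)) hv)
      have h3 : closure (g '' V (k + 1)) ⊆ N := hNc.closure_subset_iff.2 h2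
      rw [← hry k]
      exact h3 h1
    -- conclude g x = y
    have hgs : Tendsto (fun k => g (s k)) atTop (𝓝 (g x)) :=
      (g.continuous.tendsto x).comp hx
    have hgs' : Tendsto (fun k => g (s k)) atTop (𝓝 y) := by
      have := hres.const_sub y
      simpa using this
    have hxy : g x = y := tendsto_nhds_unique hgs hgs'
    -- x lies in U
    have hsV : ∀ k, s k ∈ V 0 := by
      intro k
      have := hsum k 0
      simpa using this
    have hxU : x ∈ closure (V 0) := mem_closure_of_tendsto hx (Filter.Eventually.of_forall hsV)
    have hxU' : x ∈ U := hclU' hxU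
    exact ⟨x, hxU', hxy⟩
  exact mem_of_superset (omt_stepA g hg (hV0 1)) hmain

/-- Open mapping theorem for Fréchet spaces. -/
lemma omt_isOpenMap (g : Z →L[ℝ] Y) (hg : Function.Surjective g) : IsOpenMap g := by
  intro u hu
  rw [isOpen_iff_mem_nhds]
  rintro _ ⟨x, hxu, rfl⟩
  have h1 : (fun w => -x + w) '' u ∈ 𝓝 (0 : Z) := by
    have := (isOpenMap_add_left (-x)).image_mem_nhds (hu.mem_nhds hxu)
    simpa using this
  have h2 := omt_stepB g hg h1
  have h3 := (isOpenMap_add_left (g x)).image_mem_nhds h2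
  rw [add_zero] at h3
  refine mem_of_superset h3 ?_
  rintro _ ⟨_, ⟨_, ⟨v, hv, rfl⟩, rfl⟩, rfl⟩
  refine ⟨v, hv, ?_⟩
  simp [map_add, map_neg]

end OMT

/-- A Fréchet space: a locally convex, metrizable, Hausdorff, complete
topological vector space over ℝ.  If `f : X → Y` is a continuous linear map
between Fréchet spaces whose range has finite codimension in `Y`
(i.e. `Y ⧸ range f` is finite-dimensional over ℝ), then the range of `f`
is closed in `Y`. -/
theorem range_isClosed_of_finiteCodim
    {X Y : Type*}
    [AddCommGroup X] [Module ℝ X] [UniformSpace X] [IsUniformAddGroup X]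
    [ContinuousSMul ℝ X] [LocallyConvexSpace ℝ X]
    [TopologicalSpace.MetrizableSpace X] [T2Space X] [CompleteSpace X]
    [AddCommGroup Y] [Module ℝ Y] [UniformSpace Y] [IsUniformAddGroup Y]
    [ContinuousSMul ℝ Y] [LocallyConvexSpace ℝ Y]
    [TopologicalSpace.MetrizableSpace Y] [T2Space Y] [CompleteSpace Y]
    (f : X →L[ℝ] Y)
    (h : FiniteDimensional ℝ (Y ⧸ LinearMap.range (f : X →ₗ[ℝ] Y))) :
    IsClosed (LinearMap.range (f : X →ₗ[ℝ] Y) : Set Y) := by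
  set S := LinearMap.range (f : X →ₗ[ℝ] Y) with hSdef
  obtain ⟨q, hq⟩ := Submodule.exists_isCompl S
  haveI : FiniteDimensional ℝ ↥q := (Submodule.quotientEquivOfIsCompl S q hq).finiteDimensional
  haveI : CompleteSpace ↥q := (Submodule.complete_of_finiteDimensional q).completeSpace_coe
  haveI : IsUniformAddGroup ↥q := q.toAddSubgroup.isUniformAddGroup
  haveI : (𝓤 X).IsCountablyGenerated := by
    rw [uniformity_eq_comap_nhds_zero]; infer_instance
  haveI : (𝓤 Y).IsCountablyGenerated := by
    rw [uniformity_eq_comap_nhds_zero]; infer_instance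
  haveI : (𝓤 ↥q).IsCountablyGenerated := by
    rw [uniformity_subtype]; infer_instance
  haveI : (𝓤 (X × ↥q)).IsCountablyGenerated := by
    rw [uniformity_prod_eq_comap_prod]; infer_instance
  haveI : LocallyConvexSpace ℝ ↥q := LocallyConvexSpace.induced (q.subtype)
  -- the combined map g : X × q → Y
  set g : (X × ↥q) →L[ℝ] Y :=
    f.comp (ContinuousLinearMap.fst ℝ X ↥q) + q.subtypeL.comp (ContinuousLinearMap.snd ℝ X ↥q)
    with hgdef
  have hgapp : ∀ p : X × ↥q, g p = f p.1 + (p.2 : Y) := fun p => rfl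
  have hgsurj : Function.Surjective g := by
    intro y
    have hy : y ∈ S ⊔ q := by rw [hq.sup_eq_top]; trivial
    obtain ⟨a, ha, b, hb, hab⟩ := Submodule.mem_sup.1 hy
    obtain ⟨x, rfl⟩ := ha
    exact ⟨(x, ⟨b, hb⟩), by rw [hgapp]; exact hab⟩
  have hopen : IsOpenMap g := omt_isOpenMap g hgsurj
  have hpre : IsOpen {p : X × ↥q | p.2 ≠ 0} :=
    (isClosed_singleton (x := (0 : ↥q))).isOpen_compl.preimage continuous_snd
  have himg : g '' {p : X × ↥q | p.2 ≠ 0} = (S : Set Y)ᶜ := by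
    ext y
    constructor
    · rintro ⟨⟨x, m⟩, hm, rfl⟩
      intro hy
      apply hm
      have h1 : (m : Y) ∈ S := by
        have h2 : g (x, m) - f x ∈ S := S.sub_mem hy (LinearMap.mem_range_self _ x)
        simpa [hgapp] using h2
      have h3 : (m : Y) ∈ S ⊓ q := ⟨h1, m.2⟩
      rw [hq.inf_eq_bot] at h3
      exact Subtype.ext (by simpa using h3)
    · intro hy
      obtain ⟨⟨x, m⟩, rfl⟩ := hgsurj y
      refine ⟨(x, m), ?_, rfl⟩
      intro hm0
      apply hy
      rw [hgapp]
      simp only [Set.mem_setOf_eq] at hm0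
      rw [hm0]
      simpa [hSdef] using LinearMap.mem_range_self _ x
  have hco : IsOpen ((S : Set Y)ᶜ) := himg ▸ hopen _ hpre
  simpa using isOpen_compl_iff.1 hco
end

section
/- Let X and Y be Fréchet spaces, let f : X → Y be a continuous linear map, and let K be a closed ℝ-subspace of Y containing the range of f. If the quotient vector space K ⧸ (range of f) is finite-dimensional over ℝ, then the range of f is a closed subspace of Y. -/
open Filter Topology Set Pointwise Uniformity

section OMT
set_option linter.unusedSectionVars false

variable {E F : Type*}
  [AddCommGroup E] [Module ℝ E] [UniformSpace E] [IsUniformAddGroup E]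
  [ContinuousSMul ℝ E] [TopologicalSpace.MetrizableSpace E] [CompleteSpace E]
  [AddCommGroup F] [Module ℝ F] [UniformSpace F] [IsUniformAddGroup F]
  [ContinuousSMul ℝ F] [TopologicalSpace.MetrizableSpace F] [T2Space F] [CompleteSpace F]

theorem myOMT.closure_image_nhds (g : E →L[ℝ] F) (hsurj : Function.Surjective g)
    {W : Set E} (hW : W ∈ 𝓝 0) : closure (g '' W) ∈ 𝓝 (0 : F) := by
  haveI : (𝓤 F).IsCountablyGenerated := by
    rw [uniformity_eq_comap_nhds_zero F]
    exact Filter.comap.isCountablyGenerated _ _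
  -- a symmetric half-neighborhood
  obtain ⟨V', hV', hV'W⟩ := exists_nhds_zero_half hW
  set V : Set E := V' ∩ (-V') with hVdef
  have hV : V ∈ 𝓝 0 := Filter.inter_mem hV' (by simpa using neg_mem_nhds_zero E hV')
  have hVsub : ∀ a ∈ V, ∀ b ∈ V, a - b ∈ W := by
    rintro a ⟨ha, -⟩ b ⟨-, hb⟩
    rw [sub_eq_add_neg]
    exact hV'W a ha (-b) (by simpa using hb)
  -- Baire category: the closure of `g '' V` has nonempty interior
  have hcov : (⋃ n : ℕ, closure ((((n : ℝ) + 1)) • (g '' V))) = univ := by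
    refine eq_univ_of_forall fun y => ?_
    obtain ⟨x, rfl⟩ := hsurj y
    obtain ⟨r, hr⟩ := absorbs_iff_norm.1 (absorbent_nhds_zero (𝕜 := ℝ) hV x)
    obtain ⟨n, hn⟩ := exists_nat_ge r
    have hx : x ∈ ((n : ℝ) + 1) • V := by
      refine hr ((n : ℝ) + 1) ?_ rfl
      rw [Real.norm_eq_abs, abs_of_nonneg (by positivity)]
      linarith
    obtain ⟨v, hv, rfl⟩ := hx
    refine mem_iUnion.2 ⟨n, subset_closure ?_⟩
    rw [map_smul]
    exact smul_mem_smul_set (mem_image_of_mem _ hv)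
  obtain ⟨n, hn⟩ := nonempty_interior_of_iUnion_of_closed
    (fun n : ℕ => isClosed_closure) hcov
  have hne : ((n : ℝ) + 1) ≠ 0 := by positivity
  have hint : (interior (closure (g '' V))).Nonempty := by
    rw [closure_smul₀' hne, interior_smul₀ hne] at hn
    exact smul_set_nonempty.1 hn
  obtain ⟨y₀, hy₀⟩ := hint
  -- translate to get a neighborhood of 0
  have hsubset : (· + y₀) ⁻¹' interior (closure (g '' V)) ⊆ closure (g '' W) := by
    intro z hz
    have h1 : z + y₀ ∈ closure (g '' V) := interior_subset hz
    have h2 : y₀ ∈ closure (g '' V) := interior_subset hy₀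
    have := map_mem_closure₂ (f := fun a b : F => a - b) continuous_sub h1 h2
      (u := g '' W) ?_
    · simpa using this
    · rintro - ⟨a, ha, rfl⟩ - ⟨b, hb, rfl⟩
      exact ⟨a - b, hVsub a ha b hb, by simp⟩
  refine Filter.mem_of_superset ?_ hsubset
  refine (isOpen_interior.preimage (by continuity)).mem_nhds ?_
  simpa using hy₀


theorem myOMT.image_nhds (g : E →L[ℝ] F) (hsurj : Function.Surjective g)
    {U : Set E} (hU : U ∈ 𝓝 0) : g '' U ∈ 𝓝 (0 : F) := by
  -- a closed sub-neighborhood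
  obtain ⟨C, hC, hCclosed, hCU⟩ := exists_mem_nhds_isClosed_subset hU
  -- an antitone basis of symmetric neighborhoods with `V (n+1) + V (n+1) ⊆ V n`, `V 0 ⊆ C`
  obtain ⟨u, hu, hadd⟩ := IsTopologicalAddGroup.exists_antitone_basis_nhds_zero E
  obtain ⟨k, -, hk⟩ := hu.toHasBasis.mem_iff.1 hC
  set V : ℕ → Set E := fun n => u (n + k) ∩ (-u (n + k)) with hVdef
  have hVnhds : ∀ n, V n ∈ 𝓝 0 := fun n =>
    Filter.inter_mem (hu.toHasBasis.mem_of_mem trivial)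
      (by simpa using neg_mem_nhds_zero E (hu.toHasBasis.mem_of_mem trivial))
  have hV0 : ∀ n, (0 : E) ∈ V n := fun n => mem_of_mem_nhds (hVnhds n)
  have hVadd : ∀ n, V (n + 1) + V (n + 1) ⊆ V n := by
    rintro n x ⟨a, ⟨ha1, ha2⟩, b, ⟨hb1, hb2⟩, rfl⟩
    rw [show n + 1 + k = n + k + 1 by omega] at ha1 ha2 hb1 hb2
    refine ⟨hadd (n + k) (Set.add_mem_add ha1 hb1), ?_⟩
    show -(a + b) ∈ u (n + k)
    have : -b + -a ∈ u (n + k) :=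
      hadd (n + k) (Set.add_mem_add (Set.mem_neg.1 hb2) (Set.mem_neg.1 ha2))
    simpa [neg_add] using this
  have hVanti : ∀ m n : ℕ, m ≤ n → V n ⊆ V m := by
    intro m n hmn x hx
    exact ⟨hu.antitone (by omega) hx.1,
      Set.mem_neg.2 (hu.antitone (by omega) (Set.mem_neg.1 hx.2))⟩
  have hVbasis : ∀ W' ∈ 𝓝 (0 : E), ∃ n, V n ⊆ W' := by
    intro W' hW'
    obtain ⟨m, -, hm⟩ := hu.toHasBasis.mem_iff.1 hW'
    exact ⟨m, fun x hx => hm (hu.antitone (Nat.le_add_right m k) hx.1)⟩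
  have hVC : V 0 ⊆ C := fun x hx => hk (hu.antitone (by omega) hx.1)
  -- an antitone basis in F
  obtain ⟨w, hw⟩ := (𝓝 (0 : F)).exists_antitone_basis
  -- the key claim
  have key : closure (g '' V 1) ⊆ g '' U := by
    intro y hy
    -- the inductive step
    have step : ∀ n (y' : F), y' ∈ closure (g '' V (n + 1)) →
        ∃ x, x ∈ V (n + 1) ∧ y' - g x ∈ closure (g '' V (n + 2)) ∧ y' - g x ∈ w (n + 1) := by
      intro n y' hy'
      have hT : closure (g '' V (n + 2)) ∩ w (n + 1) ∈ 𝓝 (0 : F) :=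
        Filter.inter_mem (myOMT.closure_image_nhds g hsurj (hVnhds (n + 2)))
          (hw.toHasBasis.mem_of_mem trivial)
      have hS : (fun z => y' - z) ⁻¹' (closure (g '' V (n + 2)) ∩ w (n + 1)) ∈ 𝓝 y' := by
        have hcont : Tendsto (fun z => y' - z) (𝓝 y') (𝓝 (0 : F)) := by
          have h := (continuous_sub_left (G := F) y').tendsto y'
          simpa using h
        exact hcont hT
      obtain ⟨z, hz1, hz2⟩ := (mem_closure_iff_nhds.1 hy' _ hS)
      obtain ⟨x, hx, rfl⟩ := hz2
      exact ⟨x, hx, hz1.1, hz1.2⟩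
    choose! xf hxf1 hxf2 hxf3 using step
    -- the sequence of residuals
    set yseq : ℕ → F := fun n => Nat.rec y (fun n yn => yn - g (xf n yn)) n with hyseq
    have hyrec : ∀ n, yseq (n + 1) = yseq n - g (xf n (yseq n)) := fun n => rfl
    have hyinv : ∀ n, yseq n ∈ closure (g '' V (n + 1)) := by
      intro n
      induction n with
      | zero => exact hy
      | succ n ih => rw [hyrec]; exact hxf2 n (yseq n) ih
    set xseq : ℕ → E := fun n => xf n (yseq n) with hxseq
    have hxmem : ∀ n, xseq n ∈ V (n + 1) := fun n => hxf1 n (yseq n) (hyinv n)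
    have hysmall : ∀ n, yseq (n + 1) ∈ w (n + 1) := fun n => hxf3 n (yseq n) (hyinv n)
    -- partial sums
    set s : ℕ → E := fun n => ∑ i ∈ Finset.range n, xseq i with hs
    have hs0 : s 0 = 0 := by simp only [hs]; exact Finset.sum_range_zero _
    have hssucc : ∀ n, s (n + 1) = s n + xseq n := by
      intro n; simp only [hs]; exact Finset.sum_range_succ _ _
    have hdiff : ∀ n, y - g (s n) = yseq n := by
      intro n
      induction n with
      | zero => rw [hs0]; show y - g 0 = y; simp
      | succ n ih =>
        calc y - g (s (n + 1)) = (y - g (s n)) - g (xseq n) := by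
              rw [hssucc, map_add, sub_add_eq_sub_sub]
          _ = yseq n - g (xseq n) := by rw [ih]
          _ = yseq (n + 1) := by simp only [hxseq]; exact (hyrec n).symm
    -- sums of tails lie in `V n`
    have tails : ∀ (p n : ℕ), (∑ i ∈ Finset.Ico n (n + p + 1), xseq i) ∈ V n := by
      intro p
      induction p with
      | zero =>
        intro n
        have : Finset.Ico n (n + 0 + 1) = {n} := by
          rw [show n + 0 + 1 = n + 1 from rfl]; exact Nat.Ico_succ_singleton n
        rw [this, Finset.sum_singleton]
        exact hVanti n (n + 1) (Nat.le_succ n) (hxmem n)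
      | succ p ih =>
        intro n
        rw [Finset.sum_eq_sum_Ico_succ_bot (by omega)]
        have h2 : (∑ i ∈ Finset.Ico (n + 1) (n + (p + 1) + 1), xseq i) ∈ V (n + 1) := by
          have := ih (n + 1)
          rw [show n + 1 + p + 1 = n + (p + 1) + 1 by omega] at this
          exact this
        exact hVadd n (Set.add_mem_add (hxmem n) h2)
    -- Cauchy
    have hcauchy : CauchySeq s := by
      apply cauchySeq_of_controlled (fun n : ℕ => {p : E × E | p.2 - p.1 ∈ V n})
      · intro t ht
        rw [uniformity_eq_comap_nhds_zero E] at ht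
        obtain ⟨t', ht', htt'⟩ := ht
        obtain ⟨n, hn⟩ := hVbasis t' ht'
        exact ⟨n, fun p hp => htt' (hn hp)⟩
      · intro N m n hm hn
        simp only [mem_setOf_eq]
        rcases le_or_gt m n with hmn | hmn
        · rcases eq_or_lt_of_le hmn with rfl | hlt
          · simpa using hV0 N
          · have h2 := tails (n - m - 1) m
            rw [show m + (n - m - 1) + 1 = n by omega] at h2
            have h3 : s n - s m = ∑ i ∈ Finset.Ico m n, xseq i := by
              simp only [hs]; exact (Finset.sum_Ico_eq_sub _ hmn).symm
            rw [h3]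
            exact hVanti N m hm h2
        · have h2 : (∑ i ∈ Finset.Ico n m, xseq i) ∈ V N := by
            have := tails (m - n - 1) n
            rw [show n + (m - n - 1) + 1 = m by omega] at this
            exact hVanti N n hn this
          have h3 : -(∑ i ∈ Finset.Ico n m, xseq i) ∈ V N :=
            ⟨Set.mem_neg.1 h2.2, Set.mem_neg.2 (by simpa using h2.1)⟩
          have h4 : s n - s m = -(∑ i ∈ Finset.Ico n m, xseq i) := by
            simp only [hs]
            rw [← neg_sub, ← Finset.sum_Ico_eq_sub _ hmn.le]
          rw [h4]
          exact h3
    obtain ⟨x, hx⟩ := cauchySeq_tendsto_of_complete hcauchy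
    -- x ∈ U
    have hsV : ∀ n, s n ∈ V 0 := by
      intro n
      rcases Nat.eq_zero_or_pos n with rfl | hn
      · rw [hs0]; exact hV0 0
      · have h2 := tails (n - 1) 0
        rw [show 0 + (n - 1) + 1 = n by omega] at h2
        have h3 : s n = ∑ i ∈ Finset.Ico 0 n, xseq i := by
          simp only [hs]; rw [Finset.range_eq_Ico]
        rw [h3]; exact h2
    have hxU : x ∈ U := by
      have : x ∈ closure (V 0) := mem_closure_of_tendsto hx (Filter.Eventually.of_forall hsV)
      exact hCU (hCclosed.closure_subset_iff.2 hVC this)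
    -- g x = y
    have hgy : Tendsto (fun n => g (s n)) atTop (𝓝 (g x)) := (g.continuous.tendsto x).comp hx
    have hy0 : Tendsto yseq atTop (𝓝 (0 : F)) := by
      rw [← tendsto_add_atTop_iff_nat 1]
      exact hw.tendsto fun i => hw.antitone (Nat.le_succ i) (hysmall i)
    have hgy' : Tendsto (fun n => g (s n)) atTop (𝓝 y) := by
      have h5 : Tendsto (fun n => y - yseq n) atTop (𝓝 (y - 0)) := tendsto_const_nhds.sub hy0
      simp only [sub_zero] at h5
      refine h5.congr fun n => ?_
      rw [← hdiff n]
      exact sub_sub_cancel _ _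
    exact ⟨x, hxU, tendsto_nhds_unique hgy hgy'⟩
  exact Filter.mem_of_superset (myOMT.closure_image_nhds g hsurj (hVnhds 1)) key

theorem myOMT.isOpenMap (g : E →L[ℝ] F) (hsurj : Function.Surjective g) :
    IsOpenMap g := by
  intro A hA
  rw [isOpen_iff_mem_nhds]
  rintro - ⟨a, ha, rfl⟩
  have h1 : (fun x => -a + x) '' A ∈ 𝓝 (0 : E) := by
    have himg : (fun x => -a + x) '' A = (fun x => a + x) ⁻¹' A := by
      ext x
      constructor
      · rintro ⟨b, hb, rfl⟩; simpa using hb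
      · intro hx; exact ⟨a + x, hx, by simp⟩
    rw [himg]
    exact (hA.preimage (continuous_add_left a)).mem_nhds (by simpa using ha)
  have h2 : g '' ((fun x => -a + x) '' A) ∈ 𝓝 (0 : F) := myOMT.image_nhds g hsurj h1
  have h3 : (fun y => g a + y) '' (g '' ((fun x => -a + x) '' A)) ∈ 𝓝 (g a) := by
    rw [← map_add_left_nhds_zero (g a)]
    exact Filter.image_mem_map h2
  convert h3 using 2
  rw [← image_comp, ← image_comp]
  apply (image_congr fun x hx => ?_).symm
  simp [Function.comp]

end OMT

/-- Let `X`, `Y` be Fréchet spaces (locally convex, metrizable, Hausdorff,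
complete topological vector spaces over ℝ), `f : X → Y` a continuous linear
map, and `K` a closed ℝ-subspace of `Y` containing the range of `f`.
If the quotient `K ⧸ (range f)` is finite-dimensional over ℝ, then the
range of `f` is closed in `Y`. -/
theorem range_isClosed_of_finiteCodim_in_closed_subspace
    {X Y : Type*}
    [AddCommGroup X] [Module ℝ X] [UniformSpace X] [IsUniformAddGroup X]
    [ContinuousSMul ℝ X] [LocallyConvexSpace ℝ X]
    [TopologicalSpace.MetrizableSpace X] [T2Space X] [CompleteSpace X]
    [AddCommGroup Y] [Module ℝ Y] [UniformSpace Y] [IsUniformAddGroup Y]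
    [ContinuousSMul ℝ Y] [LocallyConvexSpace ℝ Y]
    [TopologicalSpace.MetrizableSpace Y] [T2Space Y] [CompleteSpace Y]
    (f : X →L[ℝ] Y) (K : Submodule ℝ Y)
    (hKclosed : IsClosed (K : Set Y))
    (hKrange : LinearMap.range (f : X →ₗ[ℝ] Y) ≤ K)
    (h : FiniteDimensional ℝ
      (K ⧸ (LinearMap.range (f : X →ₗ[ℝ] Y)).comap K.subtype)) :
    IsClosed (LinearMap.range (f : X →ₗ[ℝ] Y) : Set Y) := by
  set M : Submodule ℝ Y := LinearMap.range (f : X →ₗ[ℝ] Y) with hM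
  set Mc : Submodule ℝ Y := M.topologicalClosure with hMc
  have hMMc : M ≤ Mc := Submodule.le_topologicalClosure M
  have hMcclosed : IsClosed (Mc : Set Y) := Submodule.isClosed_topologicalClosure M
  have hMcK : Mc ≤ K := Submodule.topologicalClosure_minimal M hKrange hKclosed
  -- the quotient Mc ⧸ M is finite-dimensional
  set M' : Submodule ℝ Mc := M.comap Mc.subtype with hM'
  haveI hfin : FiniteDimensional ℝ (Mc ⧸ M') := by
    set e : Mc →ₗ[ℝ] (K ⧸ M.comap K.subtype) :=
      (M.comap K.subtype).mkQ ∘ₗ Submodule.inclusion hMcK with he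
    have hker : M' ≤ LinearMap.ker e := by
      intro x hx
      simp only [he, LinearMap.mem_ker, LinearMap.comp_apply, Submodule.mkQ_apply,
        Submodule.Quotient.mk_eq_zero, Submodule.mem_comap]
      exact hx
    set ψ : (Mc ⧸ M') →ₗ[ℝ] (K ⧸ M.comap K.subtype) := M'.liftQ e hker with hψ
    have hinj : Function.Injective ψ := by
      rw [← LinearMap.ker_eq_bot, hψ, Submodule.ker_liftQ_eq_bot]
      intro x hx
      simp only [he, LinearMap.mem_ker, LinearMap.comp_apply, Submodule.mkQ_apply,
        Submodule.Quotient.mk_eq_zero, Submodule.mem_comap] at hx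
      exact hx
    exact Module.Finite.of_injective ψ hinj
  -- instances on Mc
  haveI : CompleteSpace Mc := hMcclosed.completeSpace_coe
  -- pick a basis of the quotient and lift it
  set n : ℕ := Module.finrank ℝ (Mc ⧸ M') with hn
  set b : Module.Basis (Fin n) ℝ (Mc ⧸ M') := Module.finBasis ℝ (Mc ⧸ M') with hb
  have hsurjQ := M'.mkQ_surjective
  choose v hv using fun i => hsurjQ (b i)
  -- the continuous linear map g : X × (Fin n → ℝ) → Mc
  have hmemMc : ∀ x : X, f x ∈ Mc := fun x => hMMc ⟨x, rfl⟩
  set f' : X →L[ℝ] Mc := f.codRestrict Mc hmemMc with hf'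
  set hlin : (Fin n → ℝ) →ₗ[ℝ] Mc := Fintype.linearCombination ℝ v with hhlin
  set hcont : (Fin n → ℝ) →L[ℝ] Mc := LinearMap.toContinuousLinearMap hlin with hhcont
  set g : (X × (Fin n → ℝ)) →L[ℝ] Mc := f'.coprod hcont with hg
  have hgapply : ∀ (x : X) (c : Fin n → ℝ), g (x, c) = f' x + hlin c := fun x c => rfl
  have hlinapply : ∀ c : Fin n → ℝ, hlin c = ∑ i, c i • v i := fun c =>
    Fintype.linearCombination_apply (R := ℝ) (v := v) c
  have hmkhlin : ∀ c : Fin n → ℝ, M'.mkQ (hlin c) = ∑ i, c i • b i := by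
    intro c
    rw [hlinapply, map_sum]
    refine Finset.sum_congr rfl fun i _ => ?_
    rw [map_smul, hv]
  have hmkf' : ∀ x : X, M'.mkQ (f' x) = 0 := by
    intro x
    rw [Submodule.mkQ_apply, Submodule.Quotient.mk_eq_zero]
    exact ⟨x, rfl⟩
  -- g is surjective
  have hgsurj : Function.Surjective g := by
    intro m
    set c : Fin n → ℝ := b.equivFun (M'.mkQ m) with hc
    have h1 : M'.mkQ (m - hlin c) = 0 := by
      rw [map_sub, hmkhlin, hc, Module.Basis.sum_equivFun, sub_self]
    rw [Submodule.mkQ_apply, Submodule.Quotient.mk_eq_zero] at h1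
    obtain ⟨x, hx⟩ := h1
    refine ⟨(x, c), ?_⟩
    apply Subtype.ext
    have : ((g (x, c) : Mc) : Y) = f x + ((hlin c : Mc) : Y) := by
      rw [hgapply]; rfl
    have hx' : ((f x : Y)) = ((m - hlin c : Mc) : Y) := hx
    rw [this, hx']
    simp
  -- the projection π
  set π : Mc →ₗ[ℝ] (Fin n → ℝ) := (b.equivFun : (Mc ⧸ M') ≃ₗ[ℝ] (Fin n → ℝ)).toLinearMap ∘ₗ M'.mkQ
    with hπ
  have hπg : ∀ p : X × (Fin n → ℝ), π (g p) = p.2 := by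
    rintro ⟨x, c⟩
    rw [hgapply]
    simp only [hπ, LinearMap.comp_apply, LinearEquiv.coe_coe, map_add, hmkf', hmkhlin, zero_add]
    rw [← Module.Basis.equivFun_symm_apply, LinearEquiv.apply_symm_apply]
    simp
  -- by the open mapping theorem, g is a quotient map, so π is continuous
  haveI : IsUniformAddGroup ↥Mc := Mc.toAddSubgroup.isUniformAddGroup
  haveI : TopologicalSpace.MetrizableSpace ↥Mc :=
    inferInstanceAs (TopologicalSpace.MetrizableSpace (Mc : Set Y))
  have hopen : IsOpenMap g := myOMT.isOpenMap g hgsurj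
  have hquot : IsQuotientMap ⇑g := hopen.isQuotientMap g.continuous hgsurj
  have hπcont : Continuous π := by
    rw [hquot.continuous_iff]
    have : ⇑π ∘ ⇑g = (Prod.snd : X × (Fin n → ℝ) → (Fin n → ℝ)) := funext hπg
    rw [this]
    exact continuous_snd
  -- hence the kernel of π, which is M', is closed in Mc
  have hset : (M' : Set Mc) = ⇑π ⁻¹' {0} := by
    ext x
    simp only [SetLike.mem_coe, mem_preimage, mem_singleton_iff, hπ, LinearMap.comp_apply,
      LinearEquiv.coe_coe]
    rw [LinearEquiv.map_eq_zero_iff, Submodule.mkQ_apply, Submodule.Quotient.mk_eq_zero]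
  have hM'closed : IsClosed (M' : Set Mc) := by
    rw [hset]
    exact isClosed_singleton.preimage hπcont
  -- conclude
  have himg : (M : Set Y) = Subtype.val '' (M' : Set Mc) := by
    ext y
    constructor
    · intro hy
      exact ⟨⟨y, hMMc hy⟩, hy, rfl⟩
    · rintro ⟨⟨m, hm⟩, hm', rfl⟩
      exact hm'
  rw [himg]
  exact hMcclosed.isClosedEmbedding_subtypeVal.isClosedMap _ hM'closed
end

section
/- Let X, Y, Z be Fréchet spaces and let d₁ : X → Y and d₂ : Y → Z be continuous linear maps with d₂ ∘ d₁ = 0 (so the range of d₁ is contained in the kernel of d₂). If the homology space (ker d₂) ⧸ (range d₁) is finite-dimensional over ℝ, then the range of d₁ is closed in Y, and consequently the quotient (ker d₂) ⧸ (range d₁), endowed with the quotient of the subspace topology of ker d₂ in Y, is a Hausdorff topological vector space. -/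
open Filter Set Topology Uniformity
open scoped Pointwise



section Baire
variable {F : Type*} [UniformSpace F] [AddCommGroup F] [IsUniformAddGroup F]
  [FirstCountableTopology F] [CompleteSpace F]

theorem myBaire : BaireSpace F := by
  have h1 : (𝓝 (0:F)).IsCountablyGenerated := inferInstance
  have h2 : (𝓤 F).IsCountablyGenerated := by
    rw [uniformity_eq_comap_nhds_zero F]; exact Filter.comap.isCountablyGenerated _ _
  letI := UniformSpace.pseudoMetricSpace F
  infer_instance
end Baire

section LemA
variable {E F : Type*}
  [AddCommGroup E] [Module ℝ E] [TopologicalSpace E] [IsTopologicalAddGroup E] [ContinuousSMul ℝ E]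
  [AddCommGroup F] [Module ℝ F] [TopologicalSpace F] [IsTopologicalAddGroup F] [ContinuousSMul ℝ F]
  [BaireSpace F]

theorem lemA (T : E →L[ℝ] F) (hT : Function.Surjective T) {U : Set E} (hU : U ∈ 𝓝 (0:E)) :
    closure (T '' U) ∈ 𝓝 (0:F) := by
  obtain ⟨V, hV, -, hVsymm, hVU⟩ := exists_closed_nhds_zero_neg_eq_add_subset hU
  -- cover F by scalings of closure (T '' V)
  have habs : Absorbent ℝ V := absorbent_nhds_zero hV
  have hcover : ⋃ n : ℕ, ((n:ℝ)+1) • closure (T '' V) = univ := by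
    refine eq_univ_of_forall fun y => ?_
    obtain ⟨x, rfl⟩ := hT y
    obtain ⟨r, hr0, hr⟩ := (habs x).exists_pos
    obtain ⟨n, hn⟩ := exists_nat_ge r
    refine mem_iUnion.2 ⟨n, ?_⟩
    have hx : x ∈ ((n:ℝ)+1) • V := by
      refine hr ((n:ℝ)+1) ?_ rfl
      rw [Real.norm_eq_abs, abs_of_nonneg (by positivity)]
      linarith
    obtain ⟨v, hv, rfl⟩ := hx
    exact ⟨T v, subset_closure ⟨v, hv, rfl⟩, (map_smul T _ _).symm⟩
  have hclosed : ∀ n : ℕ, IsClosed (((n:ℝ)+1) • closure (T '' V)) := fun n =>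
    (Homeomorph.smulOfNeZero ((n:ℝ)+1) (by positivity)).isClosedMap _ isClosed_closure
  obtain ⟨n, hn⟩ := nonempty_interior_of_iUnion_of_closed hclosed hcover
  rw [interior_smul₀ (by positivity : ((n:ℝ)+1) ≠ 0)] at hn
  obtain ⟨w, hw⟩ := hn
  obtain ⟨y₀, hy₀, -⟩ := hw
  -- interior (closure (T '' V)) - y₀ works
  have hmem : {z : F | z + y₀ ∈ interior (closure (T '' V))} ∈ 𝓝 (0:F) := by
    have : ContinuousAt (fun z : F => z + y₀) 0 := by fun_prop
    exact this.preimage_mem_nhds (by simpa using isOpen_interior.mem_nhds hy₀)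
  filter_upwards [hmem] with z hz
  have h1 : z + y₀ ∈ closure (T '' V) := interior_subset hz
  have h2 : y₀ ∈ closure (T '' V) := interior_subset hy₀
  have : z = (z + y₀) - y₀ := by abel
  rw [this]
  refine map_mem_closure₂ (continuous_sub) h1 h2 ?_
  rintro a ⟨v₁, hv₁, rfl⟩ b ⟨v₂, hv₂, rfl⟩
  refine ⟨v₁ - v₂, hVU ?_, (map_sub T _ _)⟩
  have : -v₂ ∈ V := by rw [← hVsymm]; exact Set.neg_mem_neg.2 hv₂
  rw [sub_eq_add_neg]; exact Set.add_mem_add hv₁ this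
end LemA


section LemB
variable {E F : Type*}
  [AddCommGroup E] [Module ℝ E] [UniformSpace E] [IsUniformAddGroup E] [ContinuousSMul ℝ E]
  [FirstCountableTopology E] [CompleteSpace E]
  [AddCommGroup F] [Module ℝ F] [TopologicalSpace F] [IsTopologicalAddGroup F] [ContinuousSMul ℝ F]
  [FirstCountableTopology F] [T2Space F] [BaireSpace F]



theorem lemB_zero (T : E →L[ℝ] F) (hT : Function.Surjective T)
    {S : Set E} (hS : S ∈ 𝓝 (0:E)) : T '' S ∈ 𝓝 (0:F) := by
  classical
  obtain ⟨U, hUb⟩ := (𝓝 (0:E)).exists_antitone_basis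
  obtain ⟨W, hWb⟩ := (𝓝 (0:F)).exists_antitone_basis
  -- construct shrinking symmetric sets V
  have hstep : ∀ B : Set E, B ∈ 𝓝 (0:E) →
      ∃ A : Set E, A ∈ 𝓝 (0:E) ∧ -A = A ∧ A + A ⊆ B := fun B hB => by
    obtain ⟨A, hA, -, hAs, hAB⟩ := exists_closed_nhds_zero_neg_eq_add_subset hB
    exact ⟨A, hA, hAs, hAB⟩
  let Fc : ∀ B : Set E, B ∈ 𝓝 (0:E) → {A : Set E // A ∈ 𝓝 (0:E) ∧ -A = A ∧ A + A ⊆ B} :=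
    fun B hB => Classical.indefiniteDescription _ (hstep B hB)
  let g : ℕ → {A : Set E // A ∈ 𝓝 (0:E) ∧ -A = A} := fun n => Nat.rec
    (let c := Fc S hS; ⟨c.1, c.2.1, c.2.2.1⟩)
    (fun n prev =>
      let c := Fc (prev.1 ∩ U n) (Filter.inter_mem prev.2.1 (hUb.mem n))
      ⟨c.1, c.2.1, c.2.2.1⟩) n
  set V : ℕ → Set E := fun n => (g n).1 with hV
  have hVmem : ∀ n, V n ∈ 𝓝 (0:E) := fun n => (g n).2.1
  have hVsymm : ∀ n, -(V n) = V n := fun n => (g n).2.2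
  have hV0 : V 0 + V 0 ⊆ S := (Fc S hS).2.2.2
  have hVsucc : ∀ n, V (n+1) + V (n+1) ⊆ V n ∩ U n := fun n =>
    (Fc ((g n).1 ∩ U n) (Filter.inter_mem (g n).2.1 (hUb.mem n))).2.2.2
  have hV0mem : ∀ n, (0:E) ∈ V n := fun n => mem_of_mem_nhds (hVmem n)
  have hVmono : ∀ n, V (n+1) ⊆ V n := fun n x hx => by
    have : x + 0 ∈ V n ∩ U n := hVsucc n (Set.add_mem_add hx (hV0mem (n+1)))
    simpa using this.1
  -- the closures
  set C : ℕ → Set F := fun n => closure (T '' V n) with hC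
  have hCmem : ∀ n, C n ∈ 𝓝 (0:F) := fun n => lemA T hT (hVmem n)
  -- key approximation step
  have key : ∀ n (q : F), q ∈ C (n+1) → ∃ x, x ∈ V (n+1) ∧ q - T x ∈ C (n+2) ∩ W n := by
    intro n q hq
    have hD : C (n+2) ∩ W n ∈ 𝓝 (0:F) := Filter.inter_mem (hCmem (n+2)) (hWb.mem n)
    have hcont : ContinuousAt (fun z : F => q - z) q := by fun_prop
    have hnb : (fun z : F => q - z) ⁻¹' (C (n+2) ∩ W n) ∈ 𝓝 q :=
      hcont.preimage_mem_nhds (by simpa using hD)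
    obtain ⟨z, hz1, hz2⟩ := mem_closure_iff_nhds.1 hq _ hnb
    obtain ⟨x, hx, rfl⟩ := hz2
    exact ⟨x, hx, hz1⟩
  -- goal: closure (T '' V 1) ⊆ T '' S, which suffices
  have main : C 1 ⊆ T '' S := by
    intro y hy
    -- iterate
    let M : ℕ → Type _ := fun n => {q : F // q ∈ C (n+1)}
    let step : ∀ n, M n → M (n+1) := fun n q =>
      ⟨q.1 - T (Classical.choose (key n q.1 q.2)),
        ((Classical.choose_spec (key n q.1 q.2)).2).1⟩
    let Ys : ∀ n, M n := fun n => Nat.rec (⟨y, hy⟩ : M 0) step n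
    let x : ℕ → E := fun n => Classical.choose (key n (Ys n).1 (Ys n).2)
    have hx : ∀ n, x n ∈ V (n+1) := fun n =>
      (Classical.choose_spec (key n (Ys n).1 (Ys n).2)).1
    have hYW : ∀ n, (Ys (n+1)).1 ∈ W n := fun n =>
      ((Classical.choose_spec (key n (Ys n).1 (Ys n).2)).2).2
    have hYeq : ∀ n, (Ys (n+1)).1 = (Ys n).1 - T (x n) := fun n => rfl
    set s : ℕ → E := fun n => ∑ k ∈ Finset.range n, x k with hs
    have hYsum : ∀ n, (Ys n).1 = y - T (s n) := by
      intro n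
      induction n with
      | zero =>
        have h0 : (Ys 0).1 = y := rfl
        simp [h0, hs, s]
      | succ n ih =>
        rw [hYeq n, ih, hs]
        simp only [Finset.sum_range_succ, map_add]
        abel
    -- partial sums of the Ico pieces lie in V m
    have hIco : ∀ d m, (∑ k ∈ Finset.Ico m (m+d), x k) ∈ V m := by
      intro d
      induction d with
      | zero => intro m; simpa using hV0mem m
      | succ d ih =>
        intro m
        rw [Finset.sum_eq_sum_Ico_succ_bot (by omega)]
        have h1 : x m ∈ V (m+1) := hx m
        have h2 : (∑ k ∈ Finset.Ico (m+1) (m+1+d), x k) ∈ V (m+1) := ih (m+1)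
        have : x m + (∑ k ∈ Finset.Ico (m+1) (m+1+d), x k) ∈ V (m+1) + V (m+1) :=
          Set.add_mem_add h1 h2
        have h3 := hVsucc m this
        have hre : m + 1 + d = m + (d+1) := by omega
        rw [hre] at h3
        exact h3.1
    have hIco' : ∀ m n, m ≤ n → s n - s m ∈ V m := by
      intro m n hmn
      have := Finset.sum_Ico_eq_sub x hmn
      have h2 : (∑ k ∈ Finset.Ico m n, x k) ∈ V m := by
        have : n = m + (n - m) := by omega
        rw [this]; exact hIco (n-m) m
      rwa [Finset.sum_Ico_eq_sub x hmn] at h2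
    -- Cauchy
    have hcauchy : CauchySeq s := by
      have hbasis : (𝓤 E).HasBasis (fun _ : ℕ => True)
          (fun i => {p : E × E | p.2 - p.1 ∈ U i}) := by
        rw [uniformity_eq_comap_nhds_zero E]
        exact hUb.toHasBasis.comap _
      refine hbasis.cauchySeq_iff.2 fun i _ => ⟨i+1, fun m hm n hn => ?_⟩
      show s n - s m ∈ U i
      have hsub : V (i+1) ⊆ U i := fun z hz => by
        have : z + 0 ∈ V i ∩ U i := hVsucc i (Set.add_mem_add hz (hV0mem (i+1)))
        simpa using this.2
      have hmono : ∀ a b, a ≤ b → V b ⊆ V a := by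
        intro a b hab
        induction hab with
        | refl => exact fun _ h => h
        | step _ ih => exact fun z hz => ih (hVmono _ hz)
      rcases le_total m n with h | h
      · exact hsub (hmono _ _ hm (hIco' m n h))
      · have := hIco' n m h
        have hneg : -(s m - s n) ∈ -(V n) := Set.neg_mem_neg.2 this
        rw [hVsymm n] at hneg
        simp only [neg_sub] at hneg
        exact hsub (hmono _ _ hn hneg)
    obtain ⟨a, ha⟩ := cauchySeq_tendsto_of_complete hcauchy
    -- a ∈ closure (V 0) ⊆ V 0 + V 0 ⊆ S
    have hsV0 : ∀ n, s n ∈ V 0 := by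
      intro n
      have : s n - s 0 ∈ V 0 := hIco' 0 n (Nat.zero_le n)
      simpa [hs, s] using this
    have haC : a ∈ closure (V 0) := mem_closure_of_tendsto ha (Filter.Eventually.of_forall hsV0)
    have haS : a ∈ S := by
      apply hV0
      have hcont : ContinuousAt (fun z : E => a - z) a := by fun_prop
      have hnb : (fun z : E => a - z) ⁻¹' (V 0) ∈ 𝓝 a :=
        hcont.preimage_mem_nhds (by simpa using hVmem 0)
      obtain ⟨z, hz1, hz2⟩ := mem_closure_iff_nhds.1 haC _ hnb
      have : a = (a - z) + z := by abel
      rw [this]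
      exact Set.add_mem_add hz1 hz2
    -- T a = y
    have hTsa : Tendsto (fun n => T (s n)) atTop (𝓝 (T a)) := (T.continuous.tendsto a).comp ha
    have hTy : Tendsto (fun n => T (s n)) atTop (𝓝 y) := by
      have h1 : Tendsto (fun n => y - T (s (n+1))) atTop (𝓝 0) := by
        refine hWb.toHasBasis.tendsto_right_iff.2 fun i _ => ?_
        filter_upwards [Filter.eventually_ge_atTop i] with n hn
        have : (Ys (n+1)).1 ∈ W n := hYW n
        rw [hYsum (n+1)] at this
        exact hWb.antitone hn this
      have h2 : Tendsto (fun n => T (s (n+1))) atTop (𝓝 y) := by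
        have := Filter.Tendsto.sub (tendsto_const_nhds (x := y) (f := atTop)) h1
        simpa using this
      exact (tendsto_add_atTop_iff_nat 1).1 h2
    have : T a = y := tendsto_nhds_unique hTsa hTy
    exact ⟨a, haS, this⟩
  exact Filter.mem_of_superset (hCmem 1) main
end LemB


section LemB2
variable {E F : Type*}
  [AddCommGroup E] [Module ℝ E] [UniformSpace E] [IsUniformAddGroup E] [ContinuousSMul ℝ E]
  [FirstCountableTopology E] [CompleteSpace E]
  [AddCommGroup F] [Module ℝ F] [TopologicalSpace F] [IsTopologicalAddGroup F] [ContinuousSMul ℝ F]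
  [FirstCountableTopology F] [T2Space F] [BaireSpace F]



theorem lemB (T : E →L[ℝ] F) (hT : Function.Surjective T) : IsOpenMap T := by
  have H : 𝓝 (0:F) ≤ map T (𝓝 (0:E)) := by
    intro S' hS'
    rw [Filter.mem_map] at hS'
    exact Filter.mem_of_superset (lemB_zero T hT hS') (Set.image_preimage_subset T S')
  rw [isOpenMap_iff_nhds_le]
  intro x
  calc 𝓝 (T x) = map (T x + ·) (𝓝 0) := (map_add_left_nhds_zero (T x)).symm
    _ ≤ map (T x + ·) (map T (𝓝 0)) := Filter.map_mono H
    _ = map T (map (x + ·) (𝓝 0)) := by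
        rw [Filter.map_map, Filter.map_map]
        congr 1
        ext z
        simp [map_add]
    _ = map T (𝓝 x) := by rw [map_add_left_nhds_zero x]
end LemB2
open Filter Set Topology Uniformity
open scoped Pointwise





/-- Let `X`, `Y`, `Z` be Fréchet spaces (locally convex, metrizable, Hausdorff,
complete topological vector spaces over ℝ), and `d₁ : X → Y`, `d₂ : Y → Z`
continuous linear maps with `d₂ ∘ d₁ = 0`.  If the homology
`ker d₂ ⧸ range d₁` is finite-dimensional over ℝ, then the range of `d₁` is
closed in `Y`, and the homology, with the quotient of the subspace topology
on `ker d₂`, is Hausdorff. -/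
theorem homology_hausdorff_of_finiteDimensional
    {X Y Z : Type*}
    [AddCommGroup X] [Module ℝ X] [UniformSpace X] [IsUniformAddGroup X]
    [ContinuousSMul ℝ X] [LocallyConvexSpace ℝ X]
    [TopologicalSpace.MetrizableSpace X] [T2Space X] [CompleteSpace X]
    [AddCommGroup Y] [Module ℝ Y] [UniformSpace Y] [IsUniformAddGroup Y]
    [ContinuousSMul ℝ Y] [LocallyConvexSpace ℝ Y]
    [TopologicalSpace.MetrizableSpace Y] [T2Space Y] [CompleteSpace Y]
    [AddCommGroup Z] [Module ℝ Z] [UniformSpace Z] [IsUniformAddGroup Z]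
    [ContinuousSMul ℝ Z] [LocallyConvexSpace ℝ Z]
    [TopologicalSpace.MetrizableSpace Z] [T2Space Z] [CompleteSpace Z]
    (d₁ : X →L[ℝ] Y) (d₂ : Y →L[ℝ] Z)
    (hcomp : d₂.comp d₁ = 0)
    (h : FiniteDimensional ℝ
      ((LinearMap.ker (d₂ : Y →ₗ[ℝ] Z)) ⧸
        (LinearMap.range (d₁ : X →ₗ[ℝ] Y)).comap
          (LinearMap.ker (d₂ : Y →ₗ[ℝ] Z)).subtype)) :
    IsClosed (LinearMap.range (d₁ : X →ₗ[ℝ] Y) : Set Y) ∧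
    T2Space
      ((LinearMap.ker (d₂ : Y →ₗ[ℝ] Z)) ⧸
        (LinearMap.range (d₁ : X →ₗ[ℝ] Y)).comap
          (LinearMap.ker (d₂ : Y →ₗ[ℝ] Z)).subtype) := by
  classical
  set K : Submodule ℝ Y := LinearMap.ker (d₂ : Y →ₗ[ℝ] Z) with hK
  set p : Submodule ℝ ↥K :=
    (LinearMap.range (d₁ : X →ₗ[ℝ] Y)).comap K.subtype with hp
  -- K is closed
  have hKclosed : IsClosed (K : Set Y) := by
    have : (K : Set Y) = d₂ ⁻¹' {0} := by
      ext y; simp [hK, LinearMap.mem_ker]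
    rw [this]
    exact isClosed_singleton.preimage d₂.continuous
  -- instances on K
  haveI : IsUniformAddGroup ↥K := IsUniformInducing.isUniformAddGroup (K.subtype) ⟨rfl⟩
  haveI : CompleteSpace ↥K := hKclosed.completeSpace_coe
  haveI : FirstCountableTopology ↥K := Topology.IsInducing.subtypeVal.firstCountableTopology
  haveI : BaireSpace ↥K := myBaire
  -- d₁ with codomain K
  have hd₁mem : ∀ x, d₁ x ∈ K := by
    intro x
    have := congrArg (fun f : X →L[ℝ] Z => f x) hcomp
    simpa [hK, LinearMap.mem_ker] using this
  set d₁' : X →L[ℝ] ↥K := d₁.codRestrict K hd₁mem with hd₁'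
  -- the finite-dimensional quotient
  set Q := (↥K ⧸ p) with hQ
  haveI : FiniteDimensional ℝ Q := h
  set n : ℕ := Module.finrank ℝ Q with hn
  set b : Module.Basis (Fin n) ℝ Q := Module.finBasis ℝ Q with hb
  set w : Fin n → ↥K := fun i => (Submodule.Quotient.mk_surjective p (b i)).choose with hw
  have hwspec : ∀ i, Submodule.Quotient.mk (w i) = b i := fun i =>
    (Submodule.Quotient.mk_surjective p (b i)).choose_spec
  -- the combination map
  set L : (Fin n → ℝ) →L[ℝ] ↥K :=
    ∑ i, (ContinuousLinearMap.proj i).smulRight (w i) with hL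
  have hLapply : ∀ c : Fin n → ℝ, L c = ∑ i, c i • w i := by
    intro c
    simp [hL, ContinuousLinearMap.sum_apply]
  have hmkL : ∀ c : Fin n → ℝ, (Submodule.Quotient.mk (L c) : Q) = ∑ i, c i • b i := by
    intro c
    rw [hLapply, ← Submodule.mkQ_apply, map_sum]
    simp_rw [map_smul, Submodule.mkQ_apply, hwspec]
  set S : (X × (Fin n → ℝ)) →L[ℝ] ↥K :=
    d₁'.comp (ContinuousLinearMap.fst ℝ X (Fin n → ℝ)) +
      L.comp (ContinuousLinearMap.snd ℝ X (Fin n → ℝ)) with hS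
  have hSapply : ∀ x c, S (x, c) = d₁' x + L c := fun x c => rfl
  have hd₁'p : ∀ x, d₁' x ∈ p := by
    intro x
    simp only [hp, Submodule.mem_comap]
    exact ⟨x, rfl⟩
  have hSsurj : Function.Surjective S := by
    intro y
    set c : Fin n → ℝ := fun i => b.repr (Submodule.Quotient.mk y) i with hc
    have hrepr : (∑ i, c i • b i) = Submodule.Quotient.mk y := b.sum_repr _
    have hmem : y - L c ∈ p := by
      rw [← Submodule.Quotient.mk_eq_zero]
      rw [Submodule.Quotient.mk_sub, hmkL, hrepr, sub_self]
    obtain ⟨x, hx⟩ := hmem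
    refine ⟨(x, c), ?_⟩
    rw [hSapply]
    have : d₁' x = y - L c := Subtype.ext (by
      simpa [hd₁', ContinuousLinearMap.coe_codRestrict_apply] using hx)
    rw [this]; abel
  have hmemp : ∀ (x : X) (c : Fin n → ℝ), (S (x, c) ∈ p ↔ c = 0) := by
    intro x c
    rw [hSapply]
    constructor
    · intro hmem
      have h0 : (Submodule.Quotient.mk (d₁' x + L c) : Q) = 0 :=
        (Submodule.Quotient.mk_eq_zero _).2 hmem
      rw [Submodule.Quotient.mk_add, (Submodule.Quotient.mk_eq_zero _).2 (hd₁'p x),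
        zero_add, hmkL] at h0
      have hli := b.linearIndependent
      rw [Fintype.linearIndependent_iff] at hli
      funext i
      exact hli c h0 i
    · rintro rfl
      have : L 0 = 0 := map_zero L
      rw [this, add_zero]
      exact hd₁'p x
  -- p is closed in K
  have hpclosed : IsClosed (p : Set ↥K) := by
    rw [← isOpen_compl_iff]
    have hset : (p : Set ↥K)ᶜ = S '' {q : X × (Fin n → ℝ) | q.2 ≠ 0} := by
      ext y
      constructor
      · intro hy
        obtain ⟨⟨x, c⟩, rfl⟩ := hSsurj y
        refine ⟨(x, c), ?_, rfl⟩
        intro hc0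
        exact hy ((hmemp x c).2 hc0)
      · rintro ⟨⟨x, c⟩, hc, rfl⟩
        intro hmem
        exact hc ((hmemp x c).1 hmem)
    rw [hset]
    refine lemB S hSsurj _ ?_
    exact (isClosed_singleton.preimage continuous_snd).isOpen_compl
  -- range d₁ is closed in Y
  have hrange : (LinearMap.range (d₁ : X →ₗ[ℝ] Y) : Set Y) = Subtype.val '' (p : Set ↥K) := by
    ext y
    constructor
    · rintro ⟨x, rfl⟩
      exact ⟨⟨d₁ x, hd₁mem x⟩, ⟨x, rfl⟩, rfl⟩
    · rintro ⟨⟨y', hy'⟩, hyp, rfl⟩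
      exact hyp
  constructor
  · rw [hrange]
    exact (hKclosed.isClosedEmbedding_subtypeVal.isClosedMap) _ hpclosed
  · haveI : IsClosed (p : Set ↥K) := hpclosed
    infer_instance
end
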